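/- arXiv:2006.00313 — 2 statements merged into one kernel-verified Lean document; each statement's English description precedes it below -/
import Mathlib

section
/- The sum Σ_{ℓ ∈ Z^∞_*} |ℓ|_1^3 / d(ℓ) is finite, where d(ℓ) := ∏_{i∈ℕ} (1 + |ℓ_i|^5 ⟨i⟩^5), given that Σ_{ℓ ∈ Z^∞_*} 1/∏_i (1 + ⟨i⟩^2 |ℓ_i|^2) < ∞. -/
open scoped BigOperators
open Nat

private lemma factorial_le_prod_aux (T : Finset ℕ) :
    (T.card)! ≤ ∏ i ∈ T, (i + 1) := by
  induction T using Finset.strongInduction with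
  | _ T ih =>
    rcases T.eq_empty_or_nonempty with rfl | hT
    · simp
    · set m := T.max' hT with hm
      have hmem : m ∈ T := T.max'_mem hT
      have hcard : T.card ≤ m + 1 := by
        have : T ⊆ Finset.range (m + 1) := by
          intro x hx
          exact Finset.mem_range.mpr (Nat.lt_succ_of_le (T.le_max' x hx))
        simpa using Finset.card_le_card this
      have hsub : T.erase m ⊂ T := Finset.erase_ssubset hmem
      have hih := ih (T.erase m) hsub
      have hce : (T.erase m).card = T.card - 1 := Finset.card_erase_of_mem hmem
      have hpos : 0 < T.card := Finset.card_pos.mpr hT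
      obtain ⟨k, hk⟩ : ∃ k, T.card = k + 1 := ⟨T.card - 1, (Nat.succ_pred_eq_of_pos hpos).symm⟩
      rw [← Finset.mul_prod_erase T _ hmem]
      calc (T.card)! = T.card * ((T.card - 1))! := by rw [hk]; simp [Nat.factorial_succ]
        _ ≤ (m + 1) * ∏ i ∈ T.erase m, (i + 1) := by
            apply Nat.mul_le_mul hcard
            rw [← hce]; exact hih

private lemma nat_bound_aux : ∀ m : ℕ, (m + 1) ^ 3 * 2 ^ (m + 1) ≤ 32 * (m)! ^ 3
  | 0 => by norm_num
  | 1 => by norm_num [Nat.factorial]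
  | (m + 2) => by
    have ih := nat_bound_aux (m + 1)
    have key : 2 * (m + 3) ^ 3 ≤ (m + 2) ^ 6 := by
      have hexp : (m + 2) ^ 6 = 2 * (m + 3) ^ 3
          + (m ^ 6 + 12 * m ^ 5 + 60 * m ^ 4 + 158 * m ^ 3 + 222 * m ^ 2 + 138 * m + 10) := by
        ring
      rw [hexp]; exact Nat.le_add_right _ _
    have hfac : (m + 2)! = (m + 2) * (m + 1)! := Nat.factorial_succ (m + 1)
    calc (m + 2 + 1) ^ 3 * 2 ^ (m + 2 + 1) = (2 * (m + 3) ^ 3) * 2 ^ (m + 2) := by ring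
      _ ≤ (m + 2) ^ 6 * 2 ^ (m + 2) := Nat.mul_le_mul_right _ key
      _ = (m + 2) ^ 3 * ((m + 1 + 1) ^ 3 * 2 ^ (m + 1 + 1)) := by ring
      _ ≤ (m + 2) ^ 3 * (32 * (m + 1)! ^ 3) := Nat.mul_le_mul_left _ ih
      _ = 32 * ((m + 2) * (m + 1)!) ^ 3 := by ring
      _ = 32 * (m + 2)! ^ 3 := by rw [hfac]

private lemma key_ineq (S : Finset ℕ) (a : ℕ → ℝ) (ha : ∀ i ∈ S, (i : ℝ) + 1 ≤ a i) :
    (∑ i ∈ S, a i) ^ 3 * ∏ i ∈ S, (1 + a i ^ 2) ≤ 32 * ∏ i ∈ S, (1 + a i ^ 5) := by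
  rcases S.eq_empty_or_nonempty with rfl | hS
  · norm_num
  have ha1 : ∀ i ∈ S, (1 : ℝ) ≤ a i := by
    intro i hi
    have := ha i hi
    have : (0 : ℝ) ≤ (i : ℝ) := Nat.cast_nonneg i
    linarith [ha i hi]
  have ha0 : ∀ i ∈ S, (0 : ℝ) ≤ a i := fun i hi => le_trans zero_le_one (ha1 i hi)
  obtain ⟨i₀, hi₀, hmax⟩ := S.exists_max_image a hS
  obtain ⟨m, hm⟩ : ∃ m, S.card = m + 1 :=
    ⟨S.card - 1, (Nat.succ_pred_eq_of_pos (Finset.card_pos.mpr hS)).symm⟩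
  set M := a i₀ with hMdef
  have hM1 : (1 : ℝ) ≤ M := ha1 i₀ hi₀
  -- sum bound
  have hsum : ∑ i ∈ S, a i ≤ (S.card : ℝ) * M := by
    calc ∑ i ∈ S, a i ≤ ∑ i ∈ S, M := Finset.sum_le_sum fun i hi => hmax i hi
      _ = (S.card : ℝ) * M := by rw [Finset.sum_const, nsmul_eq_mul]
  have hsum0 : (0 : ℝ) ≤ ∑ i ∈ S, a i := Finset.sum_nonneg ha0
  -- per-factor bound : a^3 (1+a^2) ≤ 2 (1+a^5)
  have hprod : (∏ i ∈ S, a i ^ 3) * ∏ i ∈ S, (1 + a i ^ 2)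
      ≤ 2 ^ S.card * ∏ i ∈ S, (1 + a i ^ 5) := by
    rw [← Finset.prod_mul_distrib, ← Finset.prod_const, ← Finset.prod_mul_distrib]
    apply Finset.prod_le_prod
    · intro i hi
      have := ha0 i hi
      positivity
    · intro i hi
      have h1 := ha1 i hi
      have h35 : a i ^ 3 ≤ a i ^ 5 := pow_le_pow_right₀ h1 (by norm_num)
      nlinarith [sq_nonneg (a i)]
  -- F : product over erase
  set F : ℝ := ∏ i ∈ S.erase i₀, ((i : ℝ) + 1) with hFdef
  have hFfact : ((m)! : ℝ) ≤ F := by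
    have h1 := factorial_le_prod_aux (S.erase i₀)
    have hce : (S.erase i₀).card = m := by
      rw [Finset.card_erase_of_mem hi₀, hm]; omega
    rw [hce] at h1
    calc ((m)! : ℝ) ≤ ((∏ i ∈ S.erase i₀, (i + 1) : ℕ) : ℝ) := by exact_mod_cast h1
      _ = F := by rw [hFdef]; push_cast; rfl
  have hMF : M ^ 3 * F ^ 3 ≤ ∏ i ∈ S, a i ^ 3 := by
    rw [← Finset.mul_prod_erase S (fun i => a i ^ 3) hi₀]
    apply mul_le_mul_of_nonneg_left _ (by positivity)
    rw [hFdef, ← Finset.prod_pow]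
    apply Finset.prod_le_prod
    · intro i hi; positivity
    · intro i hi
      have := ha i (Finset.mem_of_mem_erase hi)
      have h0 : (0 : ℝ) ≤ (i : ℝ) + 1 := by positivity
      exact pow_le_pow_left₀ h0 this 3
  have hP2 : (0 : ℝ) < ∏ i ∈ S, (1 + a i ^ 2) := Finset.prod_pos fun i hi => by
    have := ha0 i hi; positivity
  have hP5 : (0 : ℝ) ≤ ∏ i ∈ S, (1 + a i ^ 5) := le_of_lt <| Finset.prod_pos fun i hi => by
    have := ha0 i hi; positivity
  have hnum : ((S.card : ℝ)) ^ 3 * 2 ^ S.card ≤ 32 * ((m)! : ℝ) ^ 3 := by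
    have := nat_bound_aux m
    rw [hm]; exact_mod_cast this
  have hFpos : (0 : ℝ) < F :=
    lt_of_lt_of_le (by exact_mod_cast Nat.factorial_pos m) hFfact
  have hF3 : (0 : ℝ) < F ^ 3 := pow_pos hFpos 3
  rw [← mul_le_mul_iff_left₀ hF3]
  calc (∑ i ∈ S, a i) ^ 3 * (∏ i ∈ S, (1 + a i ^ 2)) * F ^ 3
      ≤ ((S.card : ℝ) * M) ^ 3 * (∏ i ∈ S, (1 + a i ^ 2)) * F ^ 3 := by
        gcongr
    _ = (S.card : ℝ) ^ 3 * ((M ^ 3 * F ^ 3) * ∏ i ∈ S, (1 + a i ^ 2)) := by ring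
    _ ≤ (S.card : ℝ) ^ 3 * ((∏ i ∈ S, a i ^ 3) * ∏ i ∈ S, (1 + a i ^ 2)) := by
        gcongr
    _ ≤ (S.card : ℝ) ^ 3 * (2 ^ S.card * ∏ i ∈ S, (1 + a i ^ 5)) := by
        gcongr
    _ = ((S.card : ℝ) ^ 3 * 2 ^ S.card) * ∏ i ∈ S, (1 + a i ^ 5) := by ring
    _ ≤ (32 * ((m)! : ℝ) ^ 3) * ∏ i ∈ S, (1 + a i ^ 5) := by gcongr
    _ ≤ (32 * F ^ 3) * ∏ i ∈ S, (1 + a i ^ 5) := by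
        gcongr
    _ = 32 * (∏ i ∈ S, (1 + a i ^ 5)) * F ^ 3 := by ring

/-- `Σ_{ℓ ∈ Z^∞_*} |ℓ|₁³ / d(ℓ) < ∞`, with
`d(ℓ) = ∏_i (1 + |ℓ_i|⁵⟨i⟩⁵)`, given Bourgain's convergence
`Σ_ℓ ∏_i (1+⟨i⟩²|ℓ_i|²)⁻¹ < ∞`.  Positive indices are realized by the
weight `i+1`. -/
theorem summable_ell_one_cubed_div_d
    (h : Summable (fun ℓ : ℕ →₀ ℤ =>
      (∏ i ∈ ℓ.support, (1 + ((i : ℝ) + 1) ^ 2 * |(ℓ i : ℝ)| ^ 2))⁻¹)) :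
    Summable (fun ℓ : ℕ →₀ ℤ =>
      (∑ i ∈ ℓ.support, ((i : ℝ) + 1) * |(ℓ i : ℝ)|) ^ 3 /
        ∏ i ∈ ℓ.support, (1 + |(ℓ i : ℝ)| ^ 5 * ((i : ℝ) + 1) ^ 5)) := by
  refine Summable.of_nonneg_of_le (fun ℓ => ?_) (fun ℓ => ?_) (h.mul_left 32)
  · 
    have h5 : (0 : ℝ) ≤ ∏ i ∈ ℓ.support, (1 + |(ℓ i : ℝ)| ^ 5 * ((i : ℝ) + 1) ^ 5) :=
      Finset.prod_nonneg fun i _ => by positivity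
    positivity
  · set a : ℕ → ℝ := fun i => ((i : ℝ) + 1) * |(ℓ i : ℝ)| with ha_def
    have hsupp : ∀ i ∈ ℓ.support, (i : ℝ) + 1 ≤ a i := by
      intro i hi
      have hne : ℓ i ≠ 0 := Finsupp.mem_support_iff.mp hi
      have h1 : (1 : ℝ) ≤ |(ℓ i : ℝ)| := by
        have : (1 : ℤ) ≤ |ℓ i| := Int.one_le_abs (by simpa using hne)
        calc (1 : ℝ) ≤ ((|ℓ i| : ℤ) : ℝ) := by exact_mod_cast this
          _ = |(ℓ i : ℝ)| := by push_cast; rfl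
      have h0 : (0 : ℝ) ≤ (i : ℝ) + 1 := by positivity
      calc (i : ℝ) + 1 = ((i : ℝ) + 1) * 1 := by ring
        _ ≤ ((i : ℝ) + 1) * |(ℓ i : ℝ)| := by gcongr
    have hkey := key_ineq ℓ.support a hsupp
    have hrw2 : ∏ i ∈ ℓ.support, (1 + a i ^ 2)
        = ∏ i ∈ ℓ.support, (1 + ((i : ℝ) + 1) ^ 2 * |(ℓ i : ℝ)| ^ 2) :=
      Finset.prod_congr rfl fun i _ => by rw [ha_def]; ring
    have hrw5 : ∏ i ∈ ℓ.support, (1 + a i ^ 5)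
        = ∏ i ∈ ℓ.support, (1 + |(ℓ i : ℝ)| ^ 5 * ((i : ℝ) + 1) ^ 5) :=
      Finset.prod_congr rfl fun i _ => by rw [ha_def]; ring
    have hrws : (∑ i ∈ ℓ.support, a i) = ∑ i ∈ ℓ.support, ((i : ℝ) + 1) * |(ℓ i : ℝ)| := rfl
    rw [hrw2, hrw5, hrws] at hkey
    have hP2 : (0 : ℝ) < ∏ i ∈ ℓ.support, (1 + ((i : ℝ) + 1) ^ 2 * |(ℓ i : ℝ)| ^ 2) :=
      Finset.prod_pos fun i _ => by positivity
    have hP5 : (0 : ℝ) < ∏ i ∈ ℓ.support, (1 + |(ℓ i : ℝ)| ^ 5 * ((i : ℝ) + 1) ^ 5) :=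
      Finset.prod_pos fun i _ => by positivity
    rw [← div_eq_mul_inv, div_le_div_iff₀ hP5 hP2]
    exact hkey
end

section
/- For every ρ > 0, the sum Σ_{ℓ ∈ Z^∞_*} e^{-ρ|ℓ|_η} converges and is bounded by C·exp(τ ln(τ/ρ) ρ^{-1/η}) for some constants C, τ = τ(η) > 0. -/
open scoped BigOperators

noncomputable def wnorm (η : ℝ) (ℓ : ℕ →₀ ℤ) : ℝ :=
  ∑ i ∈ ℓ.support, ((i : ℝ) + 1) ^ η * |(ℓ i : ℝ)|

open Finset


lemma card_le_of_add_one_le {s : Finset ℕ} {R : ℝ} (hR : 0 ≤ R)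
    (h : ∀ i ∈ s, (i : ℝ) + 1 ≤ R) : (s.card : ℝ) ≤ R := by
  have hsub : s ⊆ Finset.range ⌊R⌋₊ := by
    intro i hi
    have := h i hi
    have h1 : ((i + 1 : ℕ) : ℝ) ≤ R := by push_cast; linarith
    have := Nat.le_floor h1
    simp only [Finset.mem_range]; omega
  calc (s.card : ℝ) ≤ (Finset.range ⌊R⌋₊).card := by
        exact_mod_cast Finset.card_le_card hsub
    _ = (⌊R⌋₊ : ℝ) := by simp
    _ ≤ R := Nat.floor_le hR

lemma geom_Icc_le {r : ℝ} (h0 : 0 ≤ r) (h1 : r < 1) (m : ℕ) :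
    ∑ j ∈ Finset.Icc 1 m, r ^ j ≤ r / (1 - r) := by
  have h1r : 0 < 1 - r := by linarith
  have heq : ∑ j ∈ Finset.Icc 1 m, r ^ j = r * ∑ j ∈ Finset.range m, r ^ j := by
    rw [Finset.mul_sum]
    rw [show Finset.Icc 1 m = Finset.map ⟨fun x => x + 1, add_left_injective 1⟩
        (Finset.range m) by
      ext x
      simp only [Finset.mem_Icc, Finset.mem_map, Finset.mem_range,
        Function.Embedding.coeFn_mk]
      constructor
      · rintro ⟨ha, hb⟩; exact ⟨x - 1, by omega, by omega⟩
      · rintro ⟨y, hy, rfl⟩; omega]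
    rw [Finset.sum_map]
    exact Finset.sum_congr rfl fun j _ => by
      simp only [Function.Embedding.coeFn_mk]; ring
  rw [heq]
  have h2 : ∑ j ∈ Finset.range m, r ^ j ≤ 1 / (1 - r) := by
    rw [geom_sum_eq (by linarith : r ≠ 1)]
    have hrm : 0 ≤ r ^ m := pow_nonneg h0 m
    have : (r ^ m - 1) / (r - 1) = (1 - r ^ m) / (1 - r) := by
      rw [← neg_div_neg_eq]; ring_nf
    rw [this, div_le_div_iff₀ h1r h1r]
    nlinarith
  calc r * ∑ j ∈ Finset.range m, r ^ j ≤ r * (1 / (1 - r)) :=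
        mul_le_mul_of_nonneg_left h2 h0
    _ = r / (1 - r) := by ring

lemma sum_natAbs_pow (r : ℝ) (m : ℕ) :
    ∑ k ∈ Finset.Icc (-(m : ℤ)) m, r ^ k.natAbs
      = 1 + 2 * ∑ j ∈ Finset.Icc 1 m, r ^ j := by
  induction m with
  | zero => simp
  | succ m ih =>
    have h1 : Finset.Icc (-((m+1 : ℕ) : ℤ)) ((m+1 : ℕ) : ℤ)
        = insert (-((m+1 : ℕ) : ℤ)) (insert ((m+1 : ℕ) : ℤ) (Finset.Icc (-(m : ℤ)) m)) := by
      ext x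
      simp only [Finset.mem_Icc, Finset.mem_insert]
      push_cast
      omega
    have h2 : Finset.Icc 1 (m+1) = insert (m+1) (Finset.Icc 1 m) := by
      ext x; simp only [Finset.mem_Icc, Finset.mem_insert]; omega
    rw [h1, h2]
    rw [Finset.sum_insert (by simp only [Finset.mem_insert, Finset.mem_Icc]; push_cast; omega)]
    rw [Finset.sum_insert (by simp only [Finset.mem_Icc]; push_cast; omega)]
    rw [Finset.sum_insert (by simp only [Finset.mem_Icc]; omega)]
    have e1 : ((-((m+1 : ℕ) : ℤ)).natAbs) = m + 1 := by
      rw [Int.natAbs_neg]; omega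
    have e2 : (((m+1 : ℕ) : ℤ).natAbs) = m + 1 := by omega
    rw [e1, e2, ih]
    ring

lemma sum_Icc_exp_le {a : ℝ} (ha : 0 < a) (m : ℕ) :
    ∑ k ∈ Finset.Icc (-(m : ℤ)) m, Real.exp (-(a * |(k : ℝ)|))
      ≤ 1 + 2 * (Real.exp (-a) / (1 - Real.exp (-a))) := by
  set r := Real.exp (-a) with hr
  have hr0 : 0 < r := Real.exp_pos _
  have hr1 : r < 1 := by
    rw [hr, Real.exp_lt_one_iff]; linarith
  have hterm : ∀ k : ℤ, Real.exp (-(a * |(k : ℝ)|)) = r ^ k.natAbs := by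
    intro k
    rw [hr, ← Real.exp_nat_mul]
    congr 1
    rw [Nat.cast_natAbs]
    push_cast
    ring
  calc ∑ k ∈ Finset.Icc (-(m : ℤ)) m, Real.exp (-(a * |(k : ℝ)|))
      = ∑ k ∈ Finset.Icc (-(m : ℤ)) m, r ^ k.natAbs :=
        Finset.sum_congr rfl fun k _ => hterm k
    _ = 1 + 2 * ∑ j ∈ Finset.Icc 1 m, r ^ j := sum_natAbs_pow r m
    _ ≤ 1 + 2 * (r / (1 - r)) := by
        have := geom_Icc_le hr0.le hr1 m
        linarith

lemma Ksummable (η : ℝ) (hη : 0 < η) :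
    Summable (fun k : ℕ => ((k : ℝ) + 1) ^ (1/η) * Real.exp (-1) ^ k) := by
  set p := ⌈1/η⌉₊ with hp
  set r := Real.exp (-1) with hrdef
  have hr0 : 0 < r := Real.exp_pos _
  have hr1 : r < 1 := by rw [hrdef, Real.exp_lt_one_iff]; norm_num
  have hnorm : ‖r‖ < 1 := by rw [Real.norm_eq_abs, abs_of_pos hr0]; exact hr1
  have h1 : Summable (fun n : ℕ => (n : ℝ) ^ p * r ^ n) :=
    summable_pow_mul_geometric_of_norm_lt_one p hnorm
  have h2 : Summable (fun k : ℕ => ((k + 1 : ℕ) : ℝ) ^ p * r ^ (k + 1)) :=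
    h1.comp_injective Nat.succ_injective
  have h3 : Summable (fun k : ℕ => r⁻¹ * (((k + 1 : ℕ) : ℝ) ^ p * r ^ (k + 1))) :=
    h2.mul_left _
  apply Summable.of_nonneg_of_le
    (fun k => mul_nonneg (Real.rpow_nonneg (by positivity) _) (pow_nonneg hr0.le _))
    (fun k => ?_) h3
  have hbase : (1 : ℝ) ≤ (k : ℝ) + 1 := by have : (0:ℝ) ≤ (k:ℝ) := Nat.cast_nonneg k; linarith
  have hle : ((k : ℝ) + 1) ^ (1/η) ≤ ((k : ℝ) + 1) ^ (p : ℝ) :=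
    Real.rpow_le_rpow_of_exponent_le hbase (Nat.le_ceil _)
  have hcast : ((k : ℝ) + 1) ^ (p : ℝ) = ((k + 1 : ℕ) : ℝ) ^ p := by
    rw [Real.rpow_natCast]; push_cast; ring
  calc ((k : ℝ) + 1) ^ (1/η) * r ^ k ≤ ((k + 1 : ℕ) : ℝ) ^ p * r ^ k := by
        apply mul_le_mul_of_nonneg_right _ (pow_nonneg hr0.le _)
        rw [← hcast]; exact hle
    _ = r⁻¹ * (((k + 1 : ℕ) : ℝ) ^ p * r ^ (k + 1)) := by
        field_simp
        ring

lemma tail_sum_le (η : ℝ) (hη : 0 < η) {ρ : ℝ} (hρ : 0 < ρ) (s : Finset ℕ) :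
    ∑ i ∈ s, Real.exp (-(ρ * ((i : ℝ) + 1) ^ η))
      ≤ ρ ^ (-(1/η)) * ∑' k : ℕ, ((k : ℝ) + 1) ^ (1/η) * Real.exp (-1) ^ k := by
  set r := Real.exp (-1) with hrdef
  have hr0 : 0 < r := Real.exp_pos _
  set a : ℕ → ℝ := fun i => ρ * ((i : ℝ) + 1) ^ η with ha
  have ha0 : ∀ i, 0 < a i := fun i =>
    mul_pos hρ (Real.rpow_pos_of_pos (by have : (0:ℝ) ≤ (i:ℝ) := Nat.cast_nonneg i; linarith) _)
  have hstep1 : ∀ i, Real.exp (-(a i)) ≤ r ^ (⌊a i⌋₊) := by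
    intro i
    have : (r : ℝ) ^ (⌊a i⌋₊) = Real.exp (-(⌊a i⌋₊ : ℝ)) := by
      rw [hrdef, ← Real.exp_nat_mul]; ring_nf
    rw [this, Real.exp_le_exp]
    have := Nat.floor_le (ha0 i).le
    linarith
  have hK : ∀ k : ℕ, (0:ℝ) ≤ ((k : ℝ) + 1) ^ (1/η) * r ^ k := fun k =>
    mul_nonneg (Real.rpow_nonneg (by have : (0:ℝ) ≤ (k:ℝ) := Nat.cast_nonneg k; linarith) _)
      (pow_nonneg hr0.le _)
  calc ∑ i ∈ s, Real.exp (-(a i)) ≤ ∑ i ∈ s, r ^ (⌊a i⌋₊) :=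
        Finset.sum_le_sum fun i _ => hstep1 i
    _ = ∑ k ∈ s.image (fun i => ⌊a i⌋₊),
          ∑ i ∈ s.filter (fun i => ⌊a i⌋₊ = k), r ^ (⌊a i⌋₊) :=
        (Finset.sum_fiberwise_of_maps_to (fun i hi => Finset.mem_image_of_mem _ hi) _).symm
    _ ≤ ∑ k ∈ s.image (fun i => ⌊a i⌋₊), ρ ^ (-(1/η)) * (((k : ℝ) + 1) ^ (1/η) * r ^ k) := by
        apply Finset.sum_le_sum
        intro k hk
        have hinner : ∑ i ∈ s.filter (fun i => ⌊a i⌋₊ = k), r ^ (⌊a i⌋₊)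
            = (s.filter (fun i => ⌊a i⌋₊ = k)).card * r ^ k := by
          rw [Finset.sum_congr rfl (fun i hi => by
            rw [(Finset.mem_filter.mp hi).2])]
          rw [Finset.sum_const, nsmul_eq_mul]
        rw [hinner]
        have hcard : ((s.filter (fun i => ⌊a i⌋₊ = k)).card : ℝ)
            ≤ (((k : ℝ) + 1) / ρ) ^ (1/η) := by
          apply card_le_of_add_one_le (Real.rpow_nonneg (by positivity) _)
          intro i hi
          have hik : ⌊a i⌋₊ = k := (Finset.mem_filter.mp hi).2
          have h1 : a i < (k : ℝ) + 1 := by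
            have := Nat.lt_floor_add_one (a i)
            rw [hik] at this; exact_mod_cast this
          have hx0 : (0:ℝ) ≤ (i : ℝ) + 1 := by positivity
          have h2 : ((i : ℝ) + 1) ^ η < ((k : ℝ) + 1) / ρ := by
            rw [lt_div_iff₀ hρ, mul_comm]
            simpa using h1
          have h3 : (((i : ℝ) + 1) ^ η) ^ (1/η) < ((((k : ℝ) + 1) / ρ)) ^ (1/η) :=
            Real.rpow_lt_rpow (Real.rpow_nonneg hx0 _) h2 (by positivity)
          have h4 : (((i : ℝ) + 1) ^ η) ^ (1/η) = (i : ℝ) + 1 := by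
            rw [← Real.rpow_mul hx0, mul_one_div, div_self hη.ne', Real.rpow_one]
          rw [h4] at h3
          exact h3.le
        have hsplit : (((k : ℝ) + 1) / ρ) ^ (1/η)
            = ρ ^ (-(1/η)) * ((k : ℝ) + 1) ^ (1/η) := by
          rw [Real.div_rpow (by positivity) hρ.le, Real.rpow_neg hρ.le]
          ring
        calc ((s.filter (fun i => ⌊a i⌋₊ = k)).card : ℝ) * r ^ k
            ≤ (((k : ℝ) + 1) / ρ) ^ (1/η) * r ^ k :=
              mul_le_mul_of_nonneg_right hcard (pow_nonneg hr0.le _)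
          _ = ρ ^ (-(1/η)) * (((k : ℝ) + 1) ^ (1/η) * r ^ k) := by rw [hsplit]; ring
    _ = ρ ^ (-(1/η)) * ∑ k ∈ s.image (fun i => ⌊a i⌋₊), ((k : ℝ) + 1) ^ (1/η) * r ^ k := by
        rw [Finset.mul_sum]
    _ ≤ ρ ^ (-(1/η)) * ∑' k : ℕ, ((k : ℝ) + 1) ^ (1/η) * r ^ k := by
        apply mul_le_mul_of_nonneg_left _ (Real.rpow_nonneg hρ.le _)
        exact Summable.sum_le_tsum _ (fun k _ => hK k) (Ksummable η hη)

noncomputable def Kconst (η : ℝ) : ℝ :=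
  ∑' k : ℕ, ((k : ℝ) + 1) ^ (1/η) * Real.exp (-1) ^ k

lemma Kconst_nonneg (η : ℝ) : 0 ≤ Kconst η := by
  apply tsum_nonneg
  intro k
  exact mul_nonneg (Real.rpow_nonneg (by positivity) _) (pow_nonneg (Real.exp_pos _).le _)

lemma exp_ratio_nonneg {a : ℝ} (ha : 0 < a) :
    0 ≤ Real.exp (-a) / (1 - Real.exp (-a)) := by
  have h1 : Real.exp (-a) < 1 := by rw [Real.exp_lt_one_iff]; linarith
  exact div_nonneg (Real.exp_pos _).le (by linarith)

lemma factor_le_head {a ρ : ℝ} (hρ : 0 < ρ) (ha : ρ ≤ a) :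
    1 + 2 * (Real.exp (-a) / (1 - Real.exp (-a))) ≤ 1 + 2 / ρ := by
  have ha0 : 0 < a := lt_of_lt_of_le hρ ha
  set r := Real.exp (-a) with hr
  have hr0 : 0 < r := Real.exp_pos _
  have hr1 : r < 1 := by rw [hr, Real.exp_lt_one_iff]; linarith
  have key : r * (1 + a) ≤ 1 := by
    have h1 : 1 + a ≤ Real.exp a := by have := Real.add_one_le_exp a; linarith
    have : r * (1 + a) ≤ r * Real.exp a := mul_le_mul_of_nonneg_left h1 hr0.le
    rwa [hr, ← Real.exp_add, neg_add_cancel, Real.exp_zero] at this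
  have h2 : r / (1 - r) ≤ 1 / a := by
    rw [div_le_div_iff₀ (by linarith) ha0]
    nlinarith
  have h3 : (1 : ℝ) / a ≤ 1 / ρ := one_div_le_one_div_of_le hρ ha
  have := le_trans h2 h3
  calc 1 + 2 * (r / (1 - r)) ≤ 1 + 2 * (1 / ρ) := by linarith
    _ = 1 + 2 / ρ := by ring

lemma factor_le_tail {a : ℝ} (ha : 1 ≤ a) :
    1 + 2 * (Real.exp (-a) / (1 - Real.exp (-a))) ≤ Real.exp (4 * Real.exp (-a)) := by
  set r := Real.exp (-a) with hr
  have hr0 : 0 < r := Real.exp_pos _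
  have hrhalf : r ≤ 1 / 2 := by
    rw [hr]
    have h1 : Real.exp (-a) ≤ Real.exp (-1) := by
      rw [Real.exp_le_exp]; linarith
    have h2 : Real.exp (-1) ≤ 1 / 2 := by
      rw [Real.exp_neg]
      rw [inv_le_comm₀ (Real.exp_pos _) (by norm_num)]
      have := Real.add_one_le_exp 1
      linarith
    linarith
  have h3 : r / (1 - r) ≤ 2 * r := by
    rw [div_le_iff₀ (by linarith)]
    nlinarith
  have h4 : 1 + 2 * (r / (1 - r)) ≤ 1 + 4 * r := by linarith
  have h5 : 1 + 4 * r ≤ Real.exp (4 * r) := by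
    have := Real.add_one_le_exp (4 * r)
    linarith
  linarith

lemma partial_sum_le (η : ℝ) (hη : 0 < η) {ρ : ℝ} (hρ : 0 < ρ) (F : Finset (ℕ →₀ ℤ)) :
    ∑ ℓ ∈ F, Real.exp (-ρ * wnorm η ℓ)
      ≤ Real.exp (ρ ^ (-(1/η)) * (Real.log (1 + 2/ρ) + 4 * Kconst η)) := by
  classical
  set n : ℕ := 1 + F.sup (fun ℓ => ℓ.support.sup id) with hn
  set m : ℕ := F.sup (fun ℓ => ℓ.support.sup fun i => (ℓ i).natAbs) with hm
  have hsupp : ∀ ℓ ∈ F, ∀ i ∈ ℓ.support, i < n := by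
    intro ℓ hℓ i hi
    have h1 : i ≤ ℓ.support.sup id := Finset.le_sup (f := id) hi
    have h2 : ℓ.support.sup id ≤ F.sup (fun ℓ => ℓ.support.sup id) :=
      Finset.le_sup (f := fun ℓ => ℓ.support.sup id) hℓ
    omega
  have hmbound : ∀ ℓ ∈ F, ∀ i : ℕ, (ℓ i).natAbs ≤ m := by
    intro ℓ hℓ i
    by_cases hi : i ∈ ℓ.support
    · have h1 : (ℓ i).natAbs ≤ ℓ.support.sup (fun i => (ℓ i).natAbs) :=
        Finset.le_sup (f := fun i => (ℓ i).natAbs) hi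
      have h2 : ℓ.support.sup (fun i => (ℓ i).natAbs)
          ≤ F.sup (fun ℓ => ℓ.support.sup fun i => (ℓ i).natAbs) :=
        Finset.le_sup (f := fun ℓ => ℓ.support.sup fun i => (ℓ i).natAbs) hℓ
      omega
    · rw [Finsupp.notMem_support_iff.mp hi]; simp
  set a : ℕ → ℝ := fun i => ρ * ((i : ℝ) + 1) ^ η with ha
  have hx1 : ∀ i : ℕ, (1:ℝ) ≤ ((i : ℝ) + 1) ^ η := fun i =>
    Real.one_le_rpow (by have : (0:ℝ) ≤ (i:ℝ) := Nat.cast_nonneg i; linarith) hη.le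
  have ha0 : ∀ i, 0 < a i := fun i => mul_pos hρ (by linarith [hx1 i])
  have haρ : ∀ i, ρ ≤ a i := fun i => by
    have := hx1 i
    calc ρ = ρ * 1 := by ring
      _ ≤ ρ * ((i : ℝ) + 1) ^ η := mul_le_mul_of_nonneg_left this hρ.le
  set h : Fin n → ℤ → ℝ := fun i k => Real.exp (-(a i * |(k : ℝ)|)) with hdefh
  -- Step A
  have stepA : ∀ ℓ ∈ F, Real.exp (-ρ * wnorm η ℓ) = ∏ i : Fin n, h i (ℓ i) := by
    intro ℓ hℓ
    have hw : wnorm η ℓ = ∑ i ∈ Finset.range n, ((i : ℝ) + 1) ^ η * |(ℓ i : ℝ)| := by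
      apply Finset.sum_subset
      · intro i hi; exact Finset.mem_range.mpr (hsupp ℓ hℓ i hi)
      · intro i _ hi
        rw [Finsupp.notMem_support_iff.mp hi]; simp
    rw [hw, Finset.mul_sum, ← Fin.sum_univ_eq_sum_range
      (fun i => -ρ * (((i : ℝ) + 1) ^ η * |(ℓ i : ℝ)|)), Real.exp_sum]
    exact Finset.prod_congr rfl fun i _ => by rw [hdefh]; simp only [ha]; ring_nf
  -- Step B : injectivity
  set φ : (ℕ →₀ ℤ) → (Fin n → ℤ) := fun ℓ i => ℓ i with hφ
  have hinj : ∀ ℓ₁ ∈ F, ∀ ℓ₂ ∈ F, φ ℓ₁ = φ ℓ₂ → ℓ₁ = ℓ₂ := by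
    intro ℓ₁ h₁ ℓ₂ h₂ he
    ext i
    by_cases hi : i < n
    · exact congrFun he ⟨i, hi⟩
    · have k₁ : ℓ₁ i = 0 := by
        by_contra hne
        exact hi (hsupp ℓ₁ h₁ i (Finsupp.mem_support_iff.mpr hne))
      have k₂ : ℓ₂ i = 0 := by
        by_contra hne
        exact hi (hsupp ℓ₂ h₂ i (Finsupp.mem_support_iff.mpr hne))
      rw [k₁, k₂]
  have stepB : ∑ ℓ ∈ F, Real.exp (-ρ * wnorm η ℓ)
      = ∑ g ∈ F.image φ, ∏ i : Fin n, h i (g i) := by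
    rw [Finset.sum_image hinj]
    exact Finset.sum_congr rfl stepA
  -- Step C : subset of box
  set T : Fin n → Finset ℤ := fun _ => Finset.Icc (-(m : ℤ)) m with hT
  have hsub : F.image φ ⊆ Fintype.piFinset T := by
    intro g hg
    rw [Finset.mem_image] at hg
    obtain ⟨ℓ, hℓ, rfl⟩ := hg
    rw [Fintype.mem_piFinset]
    intro i
    rw [hT, Finset.mem_Icc]
    simp only [hφ]
    have := hmbound ℓ hℓ i
    omega
  have hprodnn : ∀ g : Fin n → ℤ, 0 ≤ ∏ i : Fin n, h i (g i) := fun g =>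
    Finset.prod_nonneg fun i _ => (Real.exp_pos _).le
  have stepC : ∑ g ∈ F.image φ, ∏ i : Fin n, h i (g i)
      ≤ ∑ g ∈ Fintype.piFinset T, ∏ i : Fin n, h i (g i) :=
    Finset.sum_le_sum_of_subset_of_nonneg hsub (fun g _ _ => hprodnn g)
  -- Step D : factorize
  have stepD : ∑ g ∈ Fintype.piFinset T, ∏ i : Fin n, h i (g i)
      = ∏ i : Fin n, ∑ k ∈ T i, h i k := (Finset.prod_univ_sum T h).symm
  -- Step E : each factor bounded
  set b : ℕ → ℝ := fun i => 1 + 2 * (Real.exp (-(a i)) / (1 - Real.exp (-(a i)))) with hb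
  have hbnn : ∀ i : ℕ, 0 ≤ b i := fun i => by
    have := exp_ratio_nonneg (ha0 i); rw [hb]; dsimp only; linarith
  have stepE : ∏ i : Fin n, ∑ k ∈ T i, h i k ≤ ∏ i : Fin n, b (i : ℕ) := by
    apply Finset.prod_le_prod
    · intro i _
      exact Finset.sum_nonneg fun k _ => (Real.exp_pos _).le
    · intro i _
      exact sum_Icc_exp_le (ha0 i) m
  have stepE' : ∏ i : Fin n, b (i : ℕ) = ∏ i ∈ Finset.range n, b i :=
    Fin.prod_univ_eq_prod_range _ n
  -- Step F : split head and tail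
  set P : ℕ → Prop := fun i => a i ≤ 1 with hP
  have hsplit : ∏ i ∈ Finset.range n, b i
      = (∏ i ∈ (Finset.range n).filter P, b i)
        * ∏ i ∈ (Finset.range n).filter (fun i => ¬ P i), b i :=
    (Finset.prod_filter_mul_prod_filter_not _ _ _).symm
  -- head
  have hcardhead : (((Finset.range n).filter P).card : ℝ) ≤ ρ ^ (-(1/η)) := by
    apply card_le_of_add_one_le (Real.rpow_nonneg hρ.le _)
    intro i hi
    have hPi : a i ≤ 1 := (Finset.mem_filter.mp hi).2
    have h2 : ((i : ℝ) + 1) ^ η ≤ 1 / ρ := by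
      rw [le_div_iff₀ hρ, mul_comm]
      simpa using hPi
    have hx0 : (0:ℝ) ≤ (i : ℝ) + 1 := by positivity
    have h3 : (((i : ℝ) + 1) ^ η) ^ (1/η) ≤ ((1:ℝ) / ρ) ^ (1/η) :=
      Real.rpow_le_rpow (Real.rpow_nonneg hx0 _) h2 (by positivity)
    have h4 : (((i : ℝ) + 1) ^ η) ^ (1/η) = (i : ℝ) + 1 := by
      rw [← Real.rpow_mul hx0, mul_one_div, div_self hη.ne', Real.rpow_one]
    have h5 : ((1:ℝ) / ρ) ^ (1/η) = ρ ^ (-(1/η)) := by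
      rw [one_div, Real.inv_rpow hρ.le, Real.rpow_neg hρ.le]
    rw [h4, h5] at h3
    exact h3
  have hhead : ∏ i ∈ (Finset.range n).filter P, b i
      ≤ Real.exp (ρ ^ (-(1/η)) * Real.log (1 + 2/ρ)) := by
    have h1 : ∏ i ∈ (Finset.range n).filter P, b i
        ≤ ∏ i ∈ (Finset.range n).filter P, (1 + 2/ρ) := by
      apply Finset.prod_le_prod (fun i _ => hbnn i)
      intro i _
      exact factor_le_head hρ (haρ i)
    rw [Finset.prod_const] at h1
    have hbase : (1:ℝ) ≤ 1 + 2/ρ := by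
      have : (0:ℝ) < 2/ρ := by positivity
      linarith
    have h2 : ((1 + 2/ρ) : ℝ) ^ ((Finset.range n).filter P).card
        = (1 + 2/ρ) ^ ((((Finset.range n).filter P).card : ℝ)) := by
      rw [Real.rpow_natCast]
    have h3 : (1 + 2/ρ) ^ ((((Finset.range n).filter P).card : ℝ))
        ≤ (1 + 2/ρ) ^ (ρ ^ (-(1/η))) :=
      Real.rpow_le_rpow_of_exponent_le hbase hcardhead
    have h4 : (1 + 2/ρ) ^ (ρ ^ (-(1/η)))
        = Real.exp (ρ ^ (-(1/η)) * Real.log (1 + 2/ρ)) := by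
      rw [Real.rpow_def_of_pos (by linarith), mul_comm]
    calc ∏ i ∈ (Finset.range n).filter P, b i
        ≤ (1 + 2/ρ) ^ ((Finset.range n).filter P).card := h1
      _ = (1 + 2/ρ) ^ ((((Finset.range n).filter P).card : ℝ)) := h2
      _ ≤ (1 + 2/ρ) ^ (ρ ^ (-(1/η))) := h3
      _ = Real.exp (ρ ^ (-(1/η)) * Real.log (1 + 2/ρ)) := h4
  -- tail
  have htail : ∏ i ∈ (Finset.range n).filter (fun i => ¬ P i), b i
      ≤ Real.exp (ρ ^ (-(1/η)) * (4 * Kconst η)) := by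
    have h1 : ∏ i ∈ (Finset.range n).filter (fun i => ¬ P i), b i
        ≤ ∏ i ∈ (Finset.range n).filter (fun i => ¬ P i),
            Real.exp (4 * Real.exp (-(a i))) := by
      apply Finset.prod_le_prod (fun i _ => hbnn i)
      intro i hi
      have : ¬ (a i ≤ 1) := (Finset.mem_filter.mp hi).2
      exact factor_le_tail (by linarith [not_le.mp this])
    rw [← Real.exp_sum] at h1
    have h2 : ∑ i ∈ (Finset.range n).filter (fun i => ¬ P i), 4 * Real.exp (-(a i))
        ≤ 4 * (ρ ^ (-(1/η)) * Kconst η) := by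
      rw [← Finset.mul_sum]
      have := tail_sum_le η hη hρ ((Finset.range n).filter (fun i => ¬ P i))
      rw [← Kconst] at this
      linarith
    calc ∏ i ∈ (Finset.range n).filter (fun i => ¬ P i), b i
        ≤ Real.exp (∑ i ∈ (Finset.range n).filter (fun i => ¬ P i),
            4 * Real.exp (-(a i))) := h1
      _ ≤ Real.exp (ρ ^ (-(1/η)) * (4 * Kconst η)) := by
          rw [Real.exp_le_exp]; linarith [h2]
  -- combine
  calc ∑ ℓ ∈ F, Real.exp (-ρ * wnorm η ℓ)
      = ∑ g ∈ F.image φ, ∏ i : Fin n, h i (g i) := stepB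
    _ ≤ ∑ g ∈ Fintype.piFinset T, ∏ i : Fin n, h i (g i) := stepC
    _ = ∏ i : Fin n, ∑ k ∈ T i, h i k := stepD
    _ ≤ ∏ i ∈ Finset.range n, b i := by rw [← stepE']; exact stepE
    _ = (∏ i ∈ (Finset.range n).filter P, b i)
        * ∏ i ∈ (Finset.range n).filter (fun i => ¬ P i), b i := hsplit
    _ ≤ Real.exp (ρ ^ (-(1/η)) * Real.log (1 + 2/ρ))
        * Real.exp (ρ ^ (-(1/η)) * (4 * Kconst η)) := by
        apply mul_le_mul hhead htail
          (Finset.prod_nonneg fun i _ => hbnn i) (Real.exp_pos _).le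
    _ = Real.exp (ρ ^ (-(1/η)) * (Real.log (1 + 2/ρ) + 4 * Kconst η)) := by
        rw [← Real.exp_add]; ring_nf

lemma wnorm_nonneg (η : ℝ) (ℓ : ℕ →₀ ℤ) : 0 ≤ wnorm η ℓ :=
  Finset.sum_nonneg fun i _ =>
    mul_nonneg (Real.rpow_nonneg (by positivity) _) (abs_nonneg _)

/-- for every ρ > 0 the sum `Σ_{ℓ ∈ Z^∞_*} e^{-ρ|ℓ|_η}`
converges and is bounded by `C exp(τ ln(τ/ρ) ρ^{-1/η})` with C, τ = τ(η) > 0. -/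
theorem sum_exp_weight_bound (η : ℝ) (hη : 0 < η) :
    ∃ C > (0 : ℝ), ∃ τ > (0 : ℝ), ∀ ρ : ℝ, 0 < ρ →
      Summable (fun ℓ : ℕ →₀ ℤ => Real.exp (-ρ * wnorm η ℓ)) ∧
      ∑' ℓ : ℕ →₀ ℤ, Real.exp (-ρ * wnorm η ℓ) ≤
        C * Real.exp (τ * Real.log (τ / ρ) * ρ ^ (-(1 : ℝ) / η)) := by
  set K := Kconst η with hKdef
  have hK : 0 ≤ K := Kconst_nonneg η
  set τ : ℝ := 3 + 4 * K with hτdef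
  have hτ3 : (3:ℝ) ≤ τ := by linarith
  have hτ0 : (0:ℝ) < τ := by linarith
  have hlog3 : (1:ℝ) < Real.log 3 := by
    have h1 : Real.exp 1 < 3 := by
      have := Real.exp_one_lt_d9
      linarith
    calc (1:ℝ) = Real.log (Real.exp 1) := (Real.log_exp 1).symm
      _ < Real.log 3 := Real.log_lt_log (Real.exp_pos 1) h1
  have hlogτ : (1:ℝ) ≤ Real.log τ := by
    calc (1:ℝ) ≤ Real.log 3 := hlog3.le
      _ ≤ Real.log τ := Real.log_le_log (by norm_num) hτ3
  set C : ℝ := Real.exp ((Real.log 3 + 4 * K) + τ * η) with hCdef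
  refine ⟨C, Real.exp_pos _, τ, hτ0, ?_⟩
  intro ρ hρ
  have hexpneg : ∀ ℓ : ℕ →₀ ℤ, (0:ℝ) ≤ Real.exp (-ρ * wnorm η ℓ) :=
    fun ℓ => (Real.exp_pos _).le
  have hsum : Summable (fun ℓ : ℕ →₀ ℤ => Real.exp (-ρ * wnorm η ℓ)) :=
    summable_of_sum_le hexpneg (fun F => partial_sum_le η hη hρ F)
  refine ⟨hsum, ?_⟩
  have hexpo : ρ ^ (-(1:ℝ)/η) = ρ ^ (-(1/η)) := by rw [show (-(1:ℝ)/η) = -(1/η) from by ring]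
  rw [hexpo]
  have hρpow : (0:ℝ) ≤ ρ ^ (-(1/η)) := Real.rpow_nonneg hρ.le _
  by_cases hρ1 : ρ ≤ 1
  · -- small ρ
    have hbound : ∑' ℓ : ℕ →₀ ℤ, Real.exp (-ρ * wnorm η ℓ)
        ≤ Real.exp (ρ ^ (-(1/η)) * (Real.log (1 + 2/ρ) + 4 * K)) :=
      Summable.tsum_le_of_sum_le hsum (fun F => partial_sum_le η hη hρ F)
    have hlogρ : Real.log ρ ≤ 0 := Real.log_nonpos hρ.le hρ1
    have hln : Real.log (1 + 2/ρ) ≤ Real.log 3 - Real.log ρ := by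
      have h1 : (1:ℝ) + 2/ρ ≤ 3/ρ := by
        have hinv : (1:ℝ) ≤ 1/ρ := by rw [le_div_iff₀ hρ]; linarith
        have h3 : (3:ℝ)/ρ = 1/ρ + 2/ρ := by ring
        linarith
      calc Real.log (1 + 2/ρ) ≤ Real.log (3/ρ) :=
            Real.log_le_log (by positivity) h1
        _ = Real.log 3 - Real.log ρ := Real.log_div (by norm_num) hρ.ne'
    have hkey : Real.log (1 + 2/ρ) + 4 * K ≤ τ * Real.log (τ / ρ) := by
      have hτρ : Real.log (τ / ρ) = Real.log τ - Real.log ρ :=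
        Real.log_div hτ0.ne' hρ.ne'
      rw [hτρ]
      have h1 : τ * 1 ≤ τ * Real.log τ := mul_le_mul_of_nonneg_left hlogτ hτ0.le
      have h2 : 0 ≤ (τ - 1) * (-Real.log ρ) := mul_nonneg (by linarith) (by linarith)
      have h3 : Real.log 3 ≤ 3 := Real.log_le_self (by norm_num)
      nlinarith
    have hfin : ρ ^ (-(1/η)) * (Real.log (1 + 2/ρ) + 4 * K)
        ≤ τ * Real.log (τ / ρ) * ρ ^ (-(1/η)) := by
      have := mul_le_mul_of_nonneg_left hkey hρpow
      linarith [this]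
    calc ∑' ℓ : ℕ →₀ ℤ, Real.exp (-ρ * wnorm η ℓ)
        ≤ Real.exp (ρ ^ (-(1/η)) * (Real.log (1 + 2/ρ) + 4 * K)) := hbound
      _ ≤ Real.exp (τ * Real.log (τ / ρ) * ρ ^ (-(1/η))) := by
          rw [Real.exp_le_exp]; exact hfin
      _ ≤ C * Real.exp (τ * Real.log (τ / ρ) * ρ ^ (-(1/η))) := by
          nlinarith [Real.exp_pos (τ * Real.log (τ / ρ) * ρ ^ (-(1/η))),
            Real.one_le_exp (show (0:ℝ) ≤ (Real.log 3 + 4 * K) + τ * η by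
              nlinarith [hlog3, hτ0, hη]), Real.exp_pos ((Real.log 3 + 4 * K) + τ * η)]
  · -- large ρ
    push_neg at hρ1
    have hmono : ∀ F : Finset (ℕ →₀ ℤ), ∑ ℓ ∈ F, Real.exp (-ρ * wnorm η ℓ)
        ≤ Real.exp ((1:ℝ) ^ (-(1/η)) * (Real.log (1 + 2/1) + 4 * K)) := by
      intro F
      have h1 : ∑ ℓ ∈ F, Real.exp (-ρ * wnorm η ℓ)
          ≤ ∑ ℓ ∈ F, Real.exp (-(1:ℝ) * wnorm η ℓ) := by
        apply Finset.sum_le_sum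
        intro ℓ _
        rw [Real.exp_le_exp]
        have := wnorm_nonneg η ℓ
        nlinarith
      exact h1.trans (partial_sum_le η hη one_pos F)
    have hG1 : (1:ℝ) ^ (-(1/η)) * (Real.log (1 + 2/1) + 4 * K)
        = Real.log 3 + 4 * K := by
      rw [Real.one_rpow]
      norm_num
    have hbound : ∑' ℓ : ℕ →₀ ℤ, Real.exp (-ρ * wnorm η ℓ)
        ≤ Real.exp (Real.log 3 + 4 * K) := by
      have := Summable.tsum_le_of_sum_le hsum hmono
      rwa [hG1] at this
    -- show exponent correction
    have hcorr : Real.log (ρ / τ) * ρ ^ (-(1/η)) ≤ η := by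
      by_cases hρτ : ρ ≤ τ
      · have h1 : Real.log (ρ / τ) ≤ 0 :=
          Real.log_nonpos (by positivity) ((div_le_one hτ0).mpr hρτ)
        nlinarith
      · push_neg at hρτ
        have h1 : Real.log (ρ / τ) ≤ Real.log ρ := by
          apply Real.log_le_log (by positivity)
          rw [div_le_iff₀ hτ0]
          nlinarith
        have h2 : Real.log ρ ≤ η * ρ ^ ((1:ℝ)/η) := by
          have h3 : Real.log (ρ ^ ((1:ℝ)/η)) = (1/η) * Real.log ρ :=
            Real.log_rpow hρ _
          have h4 : Real.log (ρ ^ ((1:ℝ)/η)) ≤ ρ ^ ((1:ℝ)/η) := by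
            have h5 : (0:ℝ) < ρ ^ ((1:ℝ)/η) := Real.rpow_pos_of_pos hρ _
            linarith [Real.log_le_sub_one_of_pos h5]
          calc Real.log ρ = η * Real.log (ρ ^ ((1:ℝ)/η)) := by
                rw [h3]; field_simp
            _ ≤ η * ρ ^ ((1:ℝ)/η) := mul_le_mul_of_nonneg_left h4 hη.le
        have h6 : Real.log (ρ / τ) * ρ ^ (-(1/η)) ≤ (η * ρ ^ ((1:ℝ)/η)) * ρ ^ (-(1/η)) :=
          mul_le_mul_of_nonneg_right (h1.trans h2) hρpow
        have h7 : ρ ^ ((1:ℝ)/η) * ρ ^ (-(1/η)) = 1 := by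
          rw [← Real.rpow_add hρ]
          norm_num
        calc Real.log (ρ / τ) * ρ ^ (-(1/η)) ≤ (η * ρ ^ ((1:ℝ)/η)) * ρ ^ (-(1/η)) := h6
          _ = η * (ρ ^ ((1:ℝ)/η) * ρ ^ (-(1/η))) := by ring
          _ = η := by rw [h7]; ring
    have hneg : -(τ * Real.log (τ / ρ) * ρ ^ (-(1/η))) ≤ τ * η := by
      have hlog : Real.log (τ / ρ) = -Real.log (ρ / τ) := by
        rw [← Real.log_inv]
        congr 1
        field_simp
      rw [hlog]
      have := mul_le_mul_of_nonneg_left hcorr hτ0.le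
      nlinarith
    calc ∑' ℓ : ℕ →₀ ℤ, Real.exp (-ρ * wnorm η ℓ)
        ≤ Real.exp (Real.log 3 + 4 * K) := hbound
      _ ≤ C * Real.exp (τ * Real.log (τ / ρ) * ρ ^ (-(1/η))) := by
          rw [hCdef, ← Real.exp_add, Real.exp_le_exp]
          linarith
end
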